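/- Let N ≥ 2, let {ψ_k}_{k=1}^{N} be an orthonormal basis of ℂ^N, let P_k = ψ_k ψ_kᴴ, and let r > 0. Define M_1 := −r·P_1 + (1+r)·P_2 + (1/2)·Σ_{k=3}^{N} P_k and M_2 := (1+r)·P_1 − r·P_2 + (1/2)·Σ_{k=3}^{N} P_k, and define pure states ρ_1 := φ_1 φ_1ᴴ and ρ_2 := φ_2 φ_2ᴴ where φ_1 := √(r/(2r+1))·ψ_1 + √((r+1)/(2r+1))·ψ_2 and φ_2 := √((r+1)/(2r+1))·ψ_1 + √(r/(2r+1))·ψ_2. Then M_1 + M_2 = I, Tr(ρ_i · M_j) = δ_{ij} for all i, j ∈ {1, 2}, and Tr(ρ_1 · ρ_2) > 0; that is, the measurement (M_1, M_2) perfectly discriminates the non-orthogonal states ρ_1 and ρ_2. -/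
import Mathlib


open ComplexOrder

lemma trace_vvv {N : ℕ} (u v w z : Fin N → ℂ) :
    (Matrix.vecMulVec u v * Matrix.vecMulVec w z).trace
      = (∑ j, v j * w j) * (∑ i, z i * u i) := by
  simp only [Matrix.trace, Matrix.diag, Matrix.mul_apply, Matrix.vecMulVec_apply,
    Finset.sum_mul, Finset.mul_sum]
  exact Finset.sum_congr rfl fun j _ => Finset.sum_congr rfl fun i _ => by ring

theorem stmt_17 {N : ℕ} (hN : 2 ≤ N)
    (ψ : Fin N → (Fin N → ℂ))
    (hortho : ∀ k l, ∑ x, (starRingEnd ℂ) (ψ k x) * ψ l x = if k = l then 1 else 0)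
    (r : ℝ) (hr : 0 < r)
    (P : Fin N → Matrix (Fin N) (Fin N) ℂ)
    (hP : ∀ k, P k = Matrix.vecMulVec (ψ k) (star (ψ k)))
    (M1 M2 : Matrix (Fin N) (Fin N) ℂ)
    (hM1 : M1 = (-(r : ℂ)) • P ⟨0, by omega⟩ + ((1 : ℂ) + (r : ℂ)) • P ⟨1, by omega⟩ +
      (2⁻¹ : ℂ) • ∑ k ∈ Finset.univ.filter (fun k : Fin N => 2 ≤ (k : ℕ)), P k)
    (hM2 : M2 = ((1 : ℂ) + (r : ℂ)) • P ⟨0, by omega⟩ + (-(r : ℂ)) • P ⟨1, by omega⟩ +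
      (2⁻¹ : ℂ) • ∑ k ∈ Finset.univ.filter (fun k : Fin N => 2 ≤ (k : ℕ)), P k)
    (φ1 φ2 : Fin N → ℂ)
    (hφ1 : φ1 = fun x => (Real.sqrt (r / (2 * r + 1)) : ℂ) * ψ ⟨0, by omega⟩ x +
      (Real.sqrt ((r + 1) / (2 * r + 1)) : ℂ) * ψ ⟨1, by omega⟩ x)
    (hφ2 : φ2 = fun x => (Real.sqrt ((r + 1) / (2 * r + 1)) : ℂ) * ψ ⟨0, by omega⟩ x +
      (Real.sqrt (r / (2 * r + 1)) : ℂ) * ψ ⟨1, by omega⟩ x)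
    (ρ1 ρ2 : Matrix (Fin N) (Fin N) ℂ)
    (hρ1 : ρ1 = Matrix.vecMulVec φ1 (star φ1))
    (hρ2 : ρ2 = Matrix.vecMulVec φ2 (star φ2)) :
    M1 + M2 = 1 ∧
    (ρ1 * M1).trace = 1 ∧ (ρ1 * M2).trace = 0 ∧
    (ρ2 * M1).trace = 0 ∧ (ρ2 * M2).trace = 1 ∧
    0 < (ρ1 * ρ2).trace := by
  set i0 : Fin N := ⟨0, by omega⟩ with hi0
  set i1 : Fin N := ⟨1, by omega⟩ with hi1
  have hi01 : i0 ≠ i1 := by simp [hi0, hi1, Fin.ext_iff]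
  have hden : (0:ℝ) < 2 * r + 1 := by linarith
  set a : ℝ := Real.sqrt (r / (2 * r + 1)) with ha
  set b : ℝ := Real.sqrt ((r + 1) / (2 * r + 1)) with hb
  have ha_pos : 0 < a := Real.sqrt_pos.mpr (by positivity)
  have hb_pos : 0 < b := Real.sqrt_pos.mpr (by positivity)
  have ha2 : (a:ℂ) * a = ((r / (2 * r + 1) : ℝ) : ℂ) := by
    rw [← Complex.ofReal_mul, Real.mul_self_sqrt (by positivity)]
  have hb2 : (b:ℂ) * b = (((r + 1) / (2 * r + 1) : ℝ) : ℂ) := by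
    rw [← Complex.ofReal_mul, Real.mul_self_sqrt (by positivity)]
  -- inner products with ψ k
  have hsplit : ∀ (k : Fin N) (c d : ℂ),
      (∑ x, star (c * ψ i0 x + d * ψ i1 x) * ψ k x)
        = star c * (if i0 = k then 1 else 0) + star d * (if i1 = k then 1 else 0) := by
    intro k c d
    rw [← hortho i0 k, ← hortho i1 k, Finset.mul_sum, Finset.mul_sum,
      ← Finset.sum_add_distrib]
    exact Finset.sum_congr rfl fun x _ => by
      simp only [star_add, star_mul', starRingEnd_apply]; ring
  have hsplit2 : ∀ (k : Fin N) (c d : ℂ),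
      (∑ x, star (ψ k x) * (c * ψ i0 x + d * ψ i1 x))
        = c * (if k = i0 then 1 else 0) + d * (if k = i1 then 1 else 0) := by
    intro k c d
    rw [← hortho k i0, ← hortho k i1, Finset.mul_sum, Finset.mul_sum,
      ← Finset.sum_add_distrib]
    exact Finset.sum_congr rfl fun x _ => by
      simp only [starRingEnd_apply]; ring
  have hstar_a : star (a:ℂ) = (a:ℂ) := by simp
  have hstar_b : star (b:ℂ) = (b:ℂ) := by simp
  -- trace of ρ * P k
  have htr1 : ∀ k : Fin N, (ρ1 * P k).trace
      = ((a:ℂ) * (if i0 = k then 1 else 0) + (b:ℂ) * (if i1 = k then 1 else 0))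
        * ((a:ℂ) * (if k = i0 then 1 else 0) + (b:ℂ) * (if k = i1 then 1 else 0)) := by
    intro k
    rw [hρ1, hP, trace_vvv]
    congr 1
    · rw [hφ1]
      simpa only [Pi.star_apply, hstar_a, hstar_b] using hsplit k (a:ℂ) (b:ℂ)
    · rw [hφ1]
      exact hsplit2 k (a:ℂ) (b:ℂ)
  have htr2 : ∀ k : Fin N, (ρ2 * P k).trace
      = ((b:ℂ) * (if i0 = k then 1 else 0) + (a:ℂ) * (if i1 = k then 1 else 0))
        * ((b:ℂ) * (if k = i0 then 1 else 0) + (a:ℂ) * (if k = i1 then 1 else 0)) := by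
    intro k
    rw [hρ2, hP, trace_vvv]
    congr 1
    · rw [hφ2]
      simpa only [Pi.star_apply, hstar_a, hstar_b] using hsplit k (b:ℂ) (a:ℂ)
    · rw [hφ2]
      exact hsplit2 k (b:ℂ) (a:ℂ)
  -- traces vanish on the tail
  have htail1 : ∀ k ∈ Finset.univ.filter (fun k : Fin N => 2 ≤ (k : ℕ)),
      (ρ1 * P k).trace = 0 := by
    intro k hk
    simp only [Finset.mem_filter] at hk
    have h0 : i0 ≠ k := by simp [hi0, Fin.ext_iff]; omega
    have h1 : i1 ≠ k := by simp [hi1, Fin.ext_iff]; omega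
    rw [htr1 k, if_neg h0, if_neg h1]
    simp
  have htail2 : ∀ k ∈ Finset.univ.filter (fun k : Fin N => 2 ≤ (k : ℕ)),
      (ρ2 * P k).trace = 0 := by
    intro k hk
    simp only [Finset.mem_filter] at hk
    have h0 : i0 ≠ k := by simp [hi0, Fin.ext_iff]; omega
    have h1 : i1 ≠ k := by simp [hi1, Fin.ext_iff]; omega
    rw [htr2 k, if_neg h0, if_neg h1]
    simp
  have hr1M : ∀ (c0 c1 : ℂ) (M : Matrix (Fin N) (Fin N) ℂ) (ρ : Matrix (Fin N) (Fin N) ℂ)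
      (hM : M = c0 • P i0 + c1 • P i1 +
        (2⁻¹ : ℂ) • ∑ k ∈ Finset.univ.filter (fun k : Fin N => 2 ≤ (k : ℕ)), P k)
      (htail : ∀ k ∈ Finset.univ.filter (fun k : Fin N => 2 ≤ (k : ℕ)), (ρ * P k).trace = 0),
      (ρ * M).trace = c0 * (ρ * P i0).trace + c1 * (ρ * P i1).trace := by
    intro c0 c1 M ρ hM htail
    rw [hM]
    simp only [Matrix.mul_add, Matrix.mul_smul, Matrix.trace_add, Matrix.trace_smul,
      Matrix.mul_sum, Matrix.trace_sum, smul_eq_mul]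
    rw [Finset.sum_congr rfl htail]
    simp
  have htr10 : (ρ1 * P i0).trace = (a:ℂ) * a := by
    rw [htr1 i0]; simp [hi01, hi01.symm]
  have htr11 : (ρ1 * P i1).trace = (b:ℂ) * b := by
    rw [htr1 i1]; simp [hi01, hi01.symm]
  have htr20 : (ρ2 * P i0).trace = (b:ℂ) * b := by
    rw [htr2 i0]; simp [hi01, hi01.symm]
  have htr21 : (ρ2 * P i1).trace = (a:ℂ) * a := by
    rw [htr2 i1]; simp [hi01, hi01.symm]
  have hdenC : (2 * (r:ℂ) + 1) ≠ 0 := by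
    have h : ((2 * r + 1 : ℝ) : ℂ) ≠ 0 := Complex.ofReal_ne_zero.mpr (by linarith)
    push_cast at h
    exact h
  -- completeness
  have hcomp : (∑ k, P k) = 1 := by
    set A : Matrix (Fin N) (Fin N) ℂ := Matrix.of (fun k x => ψ k x) with hA
    have hAA : A * A.conjTranspose = 1 := by
      ext k l
      simp only [Matrix.mul_apply, Matrix.conjTranspose_apply, hA, Matrix.of_apply,
        Matrix.one_apply]
      rw [show ((if k = l then (1:ℂ) else 0) = if l = k then 1 else 0) by
        by_cases h : k = l <;> simp [h, eq_comm]]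
      rw [← hortho l k]
      exact Finset.sum_congr rfl fun x _ => by rw [starRingEnd_apply]; ring
    have hAA' : A.conjTranspose * A = 1 := mul_eq_one_comm.mp hAA
    ext x y
    have h2 := congrArg (fun M : Matrix (Fin N) (Fin N) ℂ => M y x) hAA'
    simp only [Matrix.mul_apply, Matrix.conjTranspose_apply, hA, Matrix.of_apply,
      Matrix.one_apply] at h2
    simp only [Matrix.sum_apply, hP, Matrix.vecMulVec_apply, Pi.star_apply,
      Matrix.one_apply]
    rw [show ((if x = y then (1:ℂ) else 0) = if y = x then 1 else 0) by
      by_cases h : x = y <;> simp [h, eq_comm]]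
    rw [← h2]
    exact Finset.sum_congr rfl fun k _ => by ring
  -- filter decomposition
  have hfil : Finset.univ.filter (fun k : Fin N => ¬ 2 ≤ (k : ℕ)) = {i0, i1} := by
    ext k
    simp only [Finset.mem_filter, Finset.mem_univ, true_and, Finset.mem_insert,
      Finset.mem_singleton, hi0, hi1, Fin.ext_iff]
    omega
  have hs := Finset.sum_filter_add_sum_filter_not Finset.univ
    (fun k : Fin N => 2 ≤ (k : ℕ)) P
  rw [hcomp, hfil] at hs
  rw [Finset.sum_pair hi01] at hs
  have hsum : (∑ k ∈ Finset.univ.filter (fun k : Fin N => 2 ≤ (k : ℕ)), P k)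
      = 1 - P i0 - P i1 := by
    have := hs
    rw [← this]
    abel
  refine ⟨?_, ?_, ?_, ?_, ?_, ?_⟩
  · rw [hM1, hM2, hsum]
    module
  · rw [hr1M _ _ _ _ hM1 htail1, htr10, htr11, ha2, hb2]
    push_cast
    field_simp
    ring
  · rw [hr1M _ _ _ _ hM2 htail1, htr10, htr11, ha2, hb2]
    push_cast
    field_simp
    ring
  · rw [hr1M _ _ _ _ hM1 htail2, htr20, htr21, ha2, hb2]
    push_cast
    field_simp
    ring
  · rw [hr1M _ _ _ _ hM2 htail2, htr20, htr21, ha2, hb2]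
    push_cast
    field_simp
    ring
  · -- 0 < Tr(ρ1 ρ2)
    have hst1 : ∀ k, ∑ x, star (φ1 x) * ψ k x
        = (a:ℂ) * (if i0 = k then 1 else 0) + (b:ℂ) * (if i1 = k then 1 else 0) := by
      intro k
      rw [hφ1]
      simpa only [hstar_a, hstar_b] using hsplit k (a:ℂ) (b:ℂ)
    have hst2 : ∀ k, ∑ x, star (φ2 x) * ψ k x
        = (b:ℂ) * (if i0 = k then 1 else 0) + (a:ℂ) * (if i1 = k then 1 else 0) := by
      intro k
      rw [hφ2]
      simpa only [hstar_a, hstar_b] using hsplit k (b:ℂ) (a:ℂ)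
    have h1 : (∑ j, star (φ1 j) * φ2 j) = (b:ℂ) * a + (a:ℂ) * b := by
      calc (∑ j, star (φ1 j) * φ2 j)
          = (b:ℂ) * (∑ x, star (φ1 x) * ψ i0 x) + (a:ℂ) * (∑ x, star (φ1 x) * ψ i1 x) := by
            rw [Finset.mul_sum, Finset.mul_sum, ← Finset.sum_add_distrib]
            exact Finset.sum_congr rfl fun x _ => by rw [hφ2]; ring
        _ = (b:ℂ) * a + (a:ℂ) * b := by
            rw [hst1 i0, hst1 i1]; simp [hi01, hi01.symm]
    have h2 : (∑ j, star (φ2 j) * φ1 j) = (a:ℂ) * b + (b:ℂ) * a := by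
      calc (∑ j, star (φ2 j) * φ1 j)
          = (a:ℂ) * (∑ x, star (φ2 x) * ψ i0 x) + (b:ℂ) * (∑ x, star (φ2 x) * ψ i1 x) := by
            rw [Finset.mul_sum, Finset.mul_sum, ← Finset.sum_add_distrib]
            exact Finset.sum_congr rfl fun x _ => by rw [hφ1]; ring
        _ = (a:ℂ) * b + (b:ℂ) * a := by
            rw [hst2 i0, hst2 i1]; simp [hi01, hi01.symm]
    rw [hρ1, hρ2, trace_vvv]
    have e1 : (∑ j, (star φ1) j * φ2 j) = (b:ℂ) * a + (a:ℂ) * b := by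
      simpa only [Pi.star_apply] using h1
    have e2 : (∑ i, (star φ2) i * φ1 i) = (a:ℂ) * b + (b:ℂ) * a := by
      simpa only [Pi.star_apply] using h2
    rw [e1, e2]
    have : ((b:ℂ) * a + (a:ℂ) * b) * ((a:ℂ) * b + (b:ℂ) * a)
        = (((b * a + a * b) * (a * b + b * a) : ℝ) : ℂ) := by push_cast; ring
    rw [this]
    rw [Complex.zero_lt_real]
    positivity
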